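/- A Banach space B over ℂ is separable if and only if there exists a function φ in C(ℝ, B) that is not mean periodic, i.e., such that the closed linear span of the translates of φ is all of C(ℝ, B). -/
import Mathlib


open Topology

/-- The translateBy of a continuous function `φ : ℝ → B` by `t`, i.e. `s ↦ φ (s + t)`. -/
noncomputable def translateBy {B : Type*} [NormedAddCommGroup B] [NormedSpace ℂ B]
    (φ : C(ℝ, B)) (t : ℝ) : C(ℝ, B) :=
  φ.comp ⟨fun s => s + t, by continuity⟩

/-- `tau φ` is the closure in `C(ℝ, B)` (compact-open topology) of the linear span of
all translateBys of `φ`. -/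
noncomputable def tau {B : Type*} [NormedAddCommGroup B] [NormedSpace ℂ B]
    (φ : C(ℝ, B)) : Set C(ℝ, B) :=
  closure (Submodule.span ℂ (Set.range (translateBy φ)) : Set C(ℝ, B))

section Glue

variable {B : Type*} [NormedAddCommGroup B] [NormedSpace ℂ B]

/-- Centers of the windows. -/
noncomputable def glCenter (m : ℕ) : ℝ := (m : ℝ) ^ 2 + 3 * m

/-- Tent function: 1 on `[a m - m, a m + m]`, 0 outside `[a m - (m+1), a m + (m+1)]`. -/
noncomputable def glTent (m : ℕ) (s : ℝ) : ℝ :=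
  max 0 (min 1 (((m : ℝ) + 1) - |s - glCenter m|))

lemma glTent_continuous (m : ℕ) : Continuous (glTent m) := by
  unfold glTent
  fun_prop

lemma glTent_eq_zero {m : ℕ} {s : ℝ} (h : (m : ℝ) + 1 ≤ |s - glCenter m|) :
    glTent m s = 0 := by
  unfold glTent
  have : min 1 (((m : ℝ) + 1) - |s - glCenter m|) ≤ 0 := le_trans (min_le_right _ _) (by linarith)
  exact max_eq_left this

lemma glTent_eq_one {m : ℕ} {s : ℝ} (h : |s - glCenter m| ≤ m) : glTent m s = 1 := by
  unfold glTent
  have h1 : (1 : ℝ) ≤ ((m : ℝ) + 1) - |s - glCenter m| := by linarith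
  rw [min_eq_left h1, max_eq_right zero_le_one]

/-- One bump. -/
noncomputable def glBump (d : ℕ → C(ℝ, B)) (m : ℕ) (s : ℝ) : B :=
  glTent m s • d m (s - glCenter m)

lemma glBump_continuous (d : ℕ → C(ℝ, B)) (m : ℕ) : Continuous (glBump d m) :=
  (glTent_continuous m).smul ((d m).continuous.comp (by fun_prop))

lemma glBump_eq_zero (d : ℕ → C(ℝ, B)) {m : ℕ} {s : ℝ}
    (h : (m : ℝ) + 1 ≤ |s - glCenter m|) : glBump d m s = 0 := by
  rw [glBump, glTent_eq_zero h, zero_smul]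

lemma glSupport_lt {d : ℕ → C(ℝ, B)} {m : ℕ} {s : ℝ}
    (h : s ∈ Function.support (glBump d m)) : |s - glCenter m| < m + 1 := by
  by_contra hc
  exact h (glBump_eq_zero d (le_of_not_gt hc))

lemma glLocallyFinite (d : ℕ → C(ℝ, B)) :
    LocallyFinite fun m => Function.support (glBump d m) := by
  intro x
  refine ⟨Set.Ioo (x - 1) (x + 1), Ioo_mem_nhds (by linarith) (by linarith), ?_⟩
  have : {m : ℕ | (Function.support (glBump d m) ∩ Set.Ioo (x - 1) (x + 1)).Nonempty} ⊆
      {m : ℕ | m ≤ ⌈x + 2⌉₊} := by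
    rintro m ⟨s, hs, hs2⟩
    have h1 := glSupport_lt hs
    have h2 : glCenter m - (m + 1) < s := by
      have := abs_lt.1 h1
      linarith [this.1]
    have h3 : (m : ℝ) - 1 ≤ glCenter m - (m + 1) := by
      have hm : (0 : ℝ) ≤ m := Nat.cast_nonneg m
      unfold glCenter; nlinarith
    have h4 : (m : ℝ) < x + 2 := by
      have := hs2.2
      linarith
    simp only [Set.mem_setOf_eq]
    exact_mod_cast le_trans h4.le (Nat.le_ceil _)
  exact (Set.finite_le_nat _).subset this

/-- The glued function. -/
noncomputable def glue (d : ℕ → C(ℝ, B)) (s : ℝ) : B := ∑ᶠ m, glBump d m s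

lemma glue_continuous (d : ℕ → C(ℝ, B)) : Continuous (glue d) :=
  continuous_finsum (glBump_continuous d) (glLocallyFinite d)

lemma glSeparation {m m' : ℕ} (hne : m' ≠ m) {s : ℝ} (hs : |s| ≤ m) :
    (m' : ℝ) + 1 ≤ |s + glCenter m - glCenter m'| := by
  have hs1 : -(m : ℝ) ≤ s := neg_le_of_abs_le hs
  have hs2 : s ≤ m := le_of_abs_le hs
  rcases lt_or_gt_of_ne hne with h | h
  · -- m' < m
    have hc : (m' : ℝ) + 1 ≤ m := by exact_mod_cast h
    have : (m' : ℝ) + 1 ≤ s + glCenter m - glCenter m' := by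
      unfold glCenter; nlinarith [Nat.cast_nonneg (α := ℝ) m', Nat.cast_nonneg (α := ℝ) m]
    exact this.trans (le_abs_self _)
  · -- m < m'
    have hc : (m : ℝ) + 1 ≤ m' := by exact_mod_cast h
    have : (m' : ℝ) + 1 ≤ -(s + glCenter m - glCenter m') := by
      unfold glCenter; nlinarith [Nat.cast_nonneg (α := ℝ) m', Nat.cast_nonneg (α := ℝ) m]
    exact this.trans (neg_le_abs _)

lemma glue_agree (d : ℕ → C(ℝ, B)) {m : ℕ} {s : ℝ} (hs : |s| ≤ m) :
    glue d (s + glCenter m) = d m s := by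
  have h0 : ∀ m' : ℕ, m' ≠ m → glBump d m' (s + glCenter m) = 0 := fun m' hm' =>
    glBump_eq_zero d (glSeparation hm' hs)
  rw [glue, finsum_eq_single _ m h0, glBump]
  have : |s + glCenter m - glCenter m| ≤ m := by
    rw [add_sub_cancel_right]; exact hs
  rw [glTent_eq_one this, one_smul, add_sub_cancel_right]

end Glue

/-- A Banach space `B` over `ℂ` is separable if and only if there exists a function
`φ ∈ C(ℝ, B)` which is not mean periodic, i.e. the closed linear span of the translateBys
of `φ` is all of `C(ℝ, B)`. -/
theorem separable_iff_exists_not_meanPeriodic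
    (B : Type*) [NormedAddCommGroup B] [NormedSpace ℂ B] [CompleteSpace B] :
    TopologicalSpace.SeparableSpace B ↔ ∃ φ : C(ℝ, B), tau φ = Set.univ := by
  constructor
  · intro hsep
    haveI : SecondCountableTopology B := UniformSpace.secondCountable_of_separable B
    set g : ℕ → C(ℝ, B) := TopologicalSpace.denseSeq C(ℝ, B) with hg
    set d : ℕ → C(ℝ, B) := fun m => g m.unpair.1 with hd
    set φ : C(ℝ, B) := ⟨glue d, glue_continuous d⟩ with hφ
    refine ⟨φ, ?_⟩
    have hsub : Set.range g ⊆
        closure (Submodule.span ℂ (Set.range (translateBy φ)) : Set C(ℝ, B)) := by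
      rintro _ ⟨k, rfl⟩
      have key : Filter.Tendsto (fun j => translateBy φ (glCenter (Nat.pair k j)))
          Filter.atTop (𝓝 (g k)) := by
        rw [ContinuousMap.tendsto_iff_forall_isCompact_tendstoUniformlyOn]
        intro K hK
        rw [Metric.tendstoUniformlyOn_iff]
        intro ε hε
        obtain ⟨r, hr⟩ := hK.isBounded.subset_closedBall 0
        filter_upwards [Filter.eventually_ge_atTop ⌈r⌉₊] with j hj x hx
        have hxr : |x| ≤ r := by simpa [Real.dist_eq] using hr hx
        have hxm : |x| ≤ (Nat.pair k j : ℝ) := by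
          calc |x| ≤ r := hxr
          _ ≤ ⌈r⌉₊ := Nat.le_ceil r
          _ ≤ j := by exact_mod_cast hj
          _ ≤ Nat.pair k j := by exact_mod_cast Nat.right_le_pair k j
        have heq : translateBy φ (glCenter (Nat.pair k j)) x = g k x := by
          show glue d (x + glCenter (Nat.pair k j)) = g k x
          rw [glue_agree d hxm, hd]
          simp [Nat.unpair_pair]
        rw [heq]
        simpa using hε
      exact mem_closure_of_tendsto key (Filter.Eventually.of_forall fun j =>
        Submodule.subset_span ⟨glCenter (Nat.pair k j), rfl⟩)
    have hdr : Dense (Set.range g) := TopologicalSpace.denseRange_denseSeq _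
    have hdense := hdr.mono hsub
    rw [dense_closure] at hdense
    rw [tau]
    exact hdense.closure_eq
  · rintro ⟨φ, hφ⟩
    let L : C(ℝ, B) →ₗ[ℂ] B :=
      { toFun := fun f => f 0, map_add' := fun f g => rfl, map_smul' := fun c f => rfl }
    have h1 : TopologicalSpace.IsSeparable (Set.range ⇑φ) :=
      TopologicalSpace.isSeparable_range φ.continuous
    have h3 := (h1.span (R := ℂ)).closure
    refine TopologicalSpace.isSeparable_univ_iff.mp (h3.mono fun b _ => ?_)
    have hb : ContinuousMap.const ℝ b ∈ tau φ := by rw [hφ]; exact Set.mem_univ _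
    rw [tau] at hb
    have hc : ContinuousAt (fun f : C(ℝ, B) => f 0) (ContinuousMap.const ℝ b) :=
      (continuous_eval_const 0).continuousAt
    have h4 := mem_closure_image hc hb
    refine closure_mono ?_ h4
    rintro _ ⟨f, hf, rfl⟩
    have hle : Submodule.span ℂ (Set.range (translateBy φ)) ≤
        (Submodule.span ℂ (Set.range (φ : ℝ → B))).comap L := by
      rw [Submodule.span_le]
      rintro _ ⟨t, rfl⟩
      exact Submodule.subset_span ⟨0 + t, rfl⟩
    exact hle hf
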